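/- If the tier structure t places exactly one school in each tier, then for every school choice problem, every school weakly prefers every Nash equilibrium outcome of the TDA mechanism under t to the student-optimal stable matching (under responsive school preferences extending priorities). -/

import Mathlib

set_option linter.unusedSectionVars false

namespace SchoolChoice

/-- A strict preference over `S ∪ {self}`, encoded by an injective ranking function on
`Option S`; `none` denotes being unmatched (the student himself), and a smaller rank
means more preferred. Injective rankings on a finite set are exactly strict linear orders. -/
structure Pref (S : Type) where
  rank : Option S → ℕ
  inj : Function.Injective rank

/-- Quotas together with strict priorities of the schools: `prank s` ranks the students
at school `s`, a smaller rank meaning higher priority. -/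
structure Prio (I S : Type) where
  quota : S → ℕ
  prank : S → I → ℕ
  inj : ∀ s, Function.Injective (prank s)

variable {I S : Type} [Fintype I] [Fintype S] [DecidableEq I] [DecidableEq S]

/-- `i` has strictly higher priority than `j` at school `s`. -/
def Prio.higher (E : Prio I S) (s : S) (i j : I) : Prop :=
  E.prank s i < E.prank s j

/-- A matching assigns to each student a school or himself (`none`). -/
abbrev Matching (I S : Type) := I → Option S

/-- The set of students assigned to school `s`. -/
def assigned (μ : Matching I S) (s : S) : Finset I :=
  Finset.univ.filter (fun i => μ i = some s)

/-- Quotas are respected. -/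
def Feasible (E : Prio I S) (μ : Matching I S) : Prop :=
  ∀ s, (assigned μ s).card ≤ E.quota s

/-- `(i, s)` is a blocking pair of `μ` with respect to preferences `R`:
`i` strictly prefers `s` to his assignment, and either `s` has an empty seat
(wastefulness) or some student assigned to `s` has lower priority than `i`
(justified envy). -/
def Blocks (E : Prio I S) (R : I → Pref S) (μ : Matching I S) (i : I) (s : S) : Prop :=
  (R i).rank (some s) < (R i).rank (μ i) ∧
    ((assigned μ s).card < E.quota s ∨ ∃ j, μ j = some s ∧ E.higher s i j)

/-- Individual rationality: every student weakly prefers his assignment to being unmatched. -/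
def IndivRat (R : I → Pref S) (μ : Matching I S) : Prop :=
  ∀ i, (R i).rank (μ i) ≤ (R i).rank none

/-- Non-wastefulness: no student prefers a school with an empty seat to his assignment. -/
def NonWasteful (E : Prio I S) (R : I → Pref S) (μ : Matching I S) : Prop :=
  ∀ i s, (R i).rank (some s) < (R i).rank (μ i) → E.quota s ≤ (assigned μ s).card

/-- Stability: feasible, individually rational, and no blocking pair
(no justified envy and non-wasteful). -/
def Stable (E : Prio I S) (R : I → Pref S) (μ : Matching I S) : Prop :=
  Feasible E μ ∧ IndivRat R μ ∧ ∀ i s, ¬ Blocks E R μ i s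

/-- The student-optimal stable matching for the (reported) preferences. -/
def StudentOptimal (E : Prio I S) (R : I → Pref S) (μ : Matching I S) : Prop :=
  Stable E R μ ∧ ∀ ν, Stable E R ν → ∀ i, (R i).rank (μ i) ≤ (R i).rank (ν i)

open Classical in
/-- The student-proposing deferred acceptance mechanism: by the Gale–Shapley theorem its
outcome is the (unique) student-optimal stable matching of the reported preferences. -/
noncomputable def DA (E : Prio I S) (R : I → Pref S) : Matching I S :=
  if h : ∃ μ, StudentOptimal E R μ then h.choose else fun _ => none

/-- A strict upper bound for the values of a ranking. -/
noncomputable def bnd (p : Pref S) : ℕ := (Finset.univ.sup p.rank) + 1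

lemma rank_lt_bnd (p : Pref S) (x : Option S) : p.rank x < bnd p :=
  Nat.lt_succ_of_le (Finset.le_sup (Finset.mem_univ x))

private lemma mul_add_lt {a K B r : ℕ} (ha : a ≤ K) (hr : r < B) :
    a * B + r < (K + 1) * B := by
  calc a * B + r < a * B + B := by omega
    _ = (a + 1) * B := by ring
    _ ≤ (K + 1) * B := Nat.mul_le_mul (by omega) le_rfl

/-- Is an alternative "inside the market" `A`?  `none` always is. -/
def goodB (A : S → Prop) [DecidablePred A] : Option S → Bool
  | none => true
  | some s => decide (A s)

/-- The preference truncated to the set of schools `A`: schools in `A` (and the outside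
option `none`) keep their relative order, while all schools outside `A` are pushed below
`none` (become unacceptable), keeping their relative order among themselves. -/
noncomputable def trunc (A : S → Prop) [DecidablePred A] (p : Pref S) : Pref S where
  rank x := (if goodB A x then 0 else bnd p) + p.rank x
  inj := by
    intro x y h
    by_cases hx : goodB A x <;> by_cases hy : goodB A y <;>
      simp only [hx, hy, if_true, if_false, Bool.false_eq_true, zero_add] at h
    · exact p.inj h
    · have := rank_lt_bnd p x; omega
    · have := rank_lt_bnd p y; omega
    · exact p.inj (by omega)

/-- The reshuffled preference with respect to a tier structure `t`: acceptable schools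
are grouped by tier in increasing tier order (keeping the original relative order within
each tier) above `none`, and all unacceptable schools are placed below `none`. -/
noncomputable def reshuffle (t : S → ℕ) (p : Pref S) : Pref S where
  rank x :=
    Option.elim x ((Finset.univ.sup t + 1) * bnd p)
      (fun s =>
        if p.rank (some s) < p.rank none then t s * bnd p + p.rank (some s)
        else (Finset.univ.sup t + 1) * bnd p + 1 + p.rank (some s))
  inj := by
    have hB : ∀ x, p.rank x < bnd p := rank_lt_bnd p
    have hK : ∀ s : S, t s ≤ Finset.univ.sup t := fun s => Finset.le_sup (Finset.mem_univ s)
    intro x y h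
    rcases x with _ | s <;> rcases y with _ | s' <;>
      simp only [Option.elim_none, Option.elim_some] at h
    · rfl
    · by_cases hy : p.rank (some s') < p.rank none <;> simp only [hy, if_true, if_false] at h
      · have := mul_add_lt (hK s') (hB (some s')); omega
      · omega
    · by_cases hx : p.rank (some s) < p.rank none <;> simp only [hx, if_true, if_false] at h
      · have := mul_add_lt (hK s) (hB (some s)); omega
      · omega
    · by_cases hx : p.rank (some s) < p.rank none <;>
        by_cases hy : p.rank (some s') < p.rank none <;>
        simp only [hx, hy, if_true, if_false] at h
      · have hts : t s = t s' := by
          rcases Nat.lt_trichotomy (t s) (t s') with h1 | h1 | h1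
          · have h2 : t s * bnd p + p.rank (some s) < t s' * bnd p + p.rank (some s') := by
              have h3 := mul_add_lt (a := t s) (K := t s' - 1) (B := bnd p) (by omega) (hB (some s))
              have h4 : (t s' - 1 + 1) * bnd p = t s' * bnd p := by congr 1; omega
              omega
            omega
          · exact h1
          · have h2 : t s' * bnd p + p.rank (some s') < t s * bnd p + p.rank (some s) := by
              have h3 := mul_add_lt (a := t s') (K := t s - 1) (B := bnd p) (by omega) (hB (some s'))
              have h4 : (t s - 1 + 1) * bnd p = t s * bnd p := by congr 1; omega
              omega
            omega
        rw [hts] at h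
        exact p.inj (by omega)
      · have := mul_add_lt (hK s) (hB (some s)); omega
      · have := mul_add_lt (hK s') (hB (some s')); omega
      · exact p.inj (by omega)

/-- A tier structure assigning each school a tier in `{1, …, T}`, each tier nonempty. -/
def IsTierStructure (t : S → ℕ) (T : ℕ) : Prop :=
  (∀ s, 1 ≤ t s ∧ t s ≤ T) ∧ ∀ k, 1 ≤ k → k ≤ T → ∃ s, t s = k

/-- Rounds `1, …, k` of the tiered deferred acceptance mechanism: in round `k` the
students left unmatched so far participate in the DA mechanism with their preferences
truncated to the tier-`k` schools (already matched students participate with nothing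
acceptable); students matched in earlier rounds keep their assignments. -/
noncomputable def TDAaux (E : Prio I S) (t : S → ℕ) (Q : I → Pref S) : ℕ → Matching I S
  | 0 => fun _ => none
  | k + 1 => fun i =>
      match TDAaux E t Q k i with
      | some s => some s
      | none =>
          DA E (fun j =>
            if TDAaux E t Q k j = none then trunc (fun s => t s = k + 1) (Q j)
            else trunc (fun _ => False) (Q j)) i

/-- The tiered deferred acceptance mechanism under tier structure `t`. -/
noncomputable def TDA (E : Prio I S) (t : S → ℕ) (Q : I → Pref S) : Matching I S :=
  TDAaux E t Q (Finset.univ.sup t)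

/-- `Q` is a (pure) Nash equilibrium of the preference revelation game induced by the
mechanism `f` when the true preferences are `R`: no student can obtain a school he truly
strictly prefers by unilaterally changing his report. -/
def NashEq (R : I → Pref S) (f : (I → Pref S) → Matching I S) (Q : I → Pref S) : Prop :=
  ∀ (i : I) (Qi' : Pref S),
    (R i).rank (f Q i) ≤ (R i).rank (f (Function.update Q i Qi') i)

/-- `μ` is a Nash equilibrium outcome of the revelation game induced by `f` at true
preferences `R`. -/
def NashOutcome (R : I → Pref S) (f : (I → Pref S) → Matching I S) (μ : Matching I S) : Prop :=
  ∃ Q, NashEq R f Q ∧ f Q = μ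

/-- The preference `p` is aligned with the tier structure `t`: a (weakly) more preferred
school always lies in a weakly earlier tier. -/
def AlignedPref (t : S → ℕ) (p : Pref S) : Prop :=
  ∀ s s' : S, p.rank (some s) ≤ p.rank (some s') → t s ≤ t s'

/-- `p` lists exactly the school in `o` (if any) as acceptable. -/
def OnlyAcceptable (p : Pref S) (o : Option S) : Prop :=
  ∀ s : S, (p.rank (some s) < p.rank none ↔ o = some s)

/-- An Ergin cycle of the priority structure among the schools in `A`. -/
def Cycle (E : Prio I S) (A : S → Prop) : Prop :=
  ∃ a b : S, A a ∧ A b ∧ a ≠ b ∧ ∃ i j k : I,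
    E.higher a i j ∧ E.higher a j k ∧ E.higher b k i ∧
    ∃ Ia Ib : Finset I, Disjoint Ia Ib ∧
      (∀ l ∈ Ia, l ≠ i ∧ l ≠ j ∧ l ≠ k ∧ E.higher a l j) ∧
      (∀ l ∈ Ib, l ≠ i ∧ l ≠ j ∧ l ≠ k ∧ E.higher b l i) ∧
      Ia.card = E.quota a - 1 ∧ Ib.card = E.quota b - 1

/-- Within-tier acyclicity of a generalized priority structure: no Ergin cycle among the
schools of any single tier. -/
def WithinTierAcyclic (E : Prio I S) (t : S → ℕ) : Prop :=
  ∀ k : ℕ, ¬ Cycle E (fun s => t s = k)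

/-- The (strict) preference `pr` of school `s` over sets of students is a responsive
extension of its priorities. -/
def Responsive (E : Prio I S) (s : S) (pr : Finset I → Finset I → Prop) : Prop :=
  ∀ (J : Finset I) (i j : I), i ∉ J → j ∉ J → E.higher s i j →
    pr (insert i J) (insert j J)

/-- `t` is a refinement of `t'`: `t'` ranks `a` in a strictly later tier than `b` only
if `t` does. -/
def Refines (t t' : S → ℕ) : Prop :=
  ∀ a b : S, t' b < t' a → t b < t a


/- ============ NEW MATERIAL ============ -/
open Finset

instance (E : Prio I S) (s : S) (i j : I) : Decidable (E.higher s i j) :=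
  inferInstanceAs (Decidable (_ < _))

lemma mem_assigned {μ : Matching I S} {s : S} {i : I} :
    i ∈ assigned μ s ↔ μ i = some s := by
  simp [assigned]

lemma higher_trans {E : Prio I S} {s : S} {i j k : I} (h1 : E.higher s i j)
    (h2 : E.higher s j k) : E.higher s i k := lt_trans h1 h2

lemma higher_irrefl {E : Prio I S} {s : S} {i : I} : ¬ E.higher s i i := lt_irrefl _

lemma higher_asymm {E : Prio I S} {s : S} {i j : I} (h : E.higher s i j) :
    ¬ E.higher s j i := lt_asymm h

lemma higher_trichotomy (E : Prio I S) (s : S) (i j : I) :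
    i = j ∨ E.higher s i j ∨ E.higher s j i := by
  rcases lt_trichotomy (E.prank s i) (E.prank s j) with h | h | h
  · exact Or.inr (Or.inl h)
  · exact Or.inl (E.inj s h)
  · exact Or.inr (Or.inr h)

/-- number of students in `A` with higher priority than `i` at `s`. -/
def cnt (E : Prio I S) (s : S) (A : Finset I) (i : I) : ℕ :=
  (A.filter (fun j => E.higher s j i)).card

/-- the top `quota s` students of `A` by priority at `s`. -/
def kept (E : Prio I S) (s : S) (A : Finset I) : Finset I :=
  A.filter (fun i => cnt E s A i < E.quota s)

lemma kept_subset (E : Prio I S) (s : S) (A : Finset I) : kept E s A ⊆ A :=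
  filter_subset _ _

lemma mem_kept {E : Prio I S} {s : S} {A : Finset I} {i : I} :
    i ∈ kept E s A ↔ i ∈ A ∧ cnt E s A i < E.quota s := mem_filter

lemma cnt_le_of_subset (E : Prio I S) (s : S) {A A' : Finset I} (h : A' ⊆ A) (i : I) :
    cnt E s A' i ≤ cnt E s A i :=
  card_le_card (filter_subset_filter _ h)

lemma cnt_lt_cnt {E : Prio I S} {s : S} {A : Finset I} {i j : I}
    (hjA : j ∈ A) (hji : E.higher s j i) : cnt E s A j < cnt E s A i := by
  have hsub : insert j (A.filter (fun l => E.higher s l j)) ⊆ A.filter (fun l => E.higher s l i) := by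
    intro l hl
    rcases mem_insert.mp hl with rfl | hl
    · exact mem_filter.mpr ⟨hjA, hji⟩
    · rcases mem_filter.mp hl with ⟨hlA, hlj⟩
      exact mem_filter.mpr ⟨hlA, higher_trans hlj hji⟩
  have hj : j ∉ A.filter (fun l => E.higher s l j) := by
    simp [higher_irrefl]
  calc cnt E s A j < cnt E s A j + 1 := Nat.lt_succ_self _
    _ = (insert j (A.filter (fun l => E.higher s l j))).card := (card_insert_of_notMem hj).symm
    _ ≤ _ := card_le_card hsub

lemma cnt_le_cnt_of_higher {E : Prio I S} {s : S} {A : Finset I} {i j : I}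
    (hji : E.higher s j i) : cnt E s A j ≤ cnt E s A i := by
  apply card_le_card
  intro l hl
  rcases mem_filter.mp hl with ⟨hlA, hlj⟩
  exact mem_filter.mpr ⟨hlA, higher_trans hlj hji⟩

/-- anybody kept has higher priority than anybody with `cnt ≥ quota`. -/
lemma kept_beats {E : Prio I S} {s : S} {A : Finset I} {i j : I}
    (hj : j ∈ kept E s A) (hi : E.quota s ≤ cnt E s A i) : E.higher s j i := by
  rcases mem_kept.mp hj with ⟨hjA, hjc⟩
  rcases higher_trichotomy E s i j with rfl | h | h
  · omega
  · have := cnt_le_cnt_of_higher (A := A) h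
    omega
  · exact h

lemma cnt_lt_card {E : Prio I S} {s : S} {A : Finset I} {i : I} (hi : i ∈ A) :
    cnt E s A i < A.card := by
  have hsub : A.filter (fun j => E.higher s j i) ⊆ A.erase i := by
    intro l hl
    rcases mem_filter.mp hl with ⟨hlA, hli⟩
    exact mem_erase.mpr ⟨fun h => higher_irrefl (h ▸ hli), hlA⟩
  calc cnt E s A i ≤ (A.erase i).card := card_le_card hsub
    _ < A.card := card_erase_lt_of_mem hi

lemma cnt_injOn (E : Prio I S) (s : S) (A : Finset I) :
    Set.InjOn (cnt E s A) A := by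
  intro i hi j hj hij
  rcases higher_trichotomy E s i j with h | h | h
  · exact h
  · exact absurd hij (Nat.ne_of_lt (cnt_lt_cnt (mem_coe.mp hi) h))
  · exact absurd hij.symm (Nat.ne_of_lt (cnt_lt_cnt (mem_coe.mp hj) h))

lemma image_cnt (E : Prio I S) (s : S) (A : Finset I) :
    A.image (cnt E s A) = range A.card := by
  apply eq_of_subset_of_card_le
  · intro n hn
    rcases mem_image.mp hn with ⟨i, hi, rfl⟩
    exact mem_range.mpr (cnt_lt_card hi)
  · rw [card_range, card_image_of_injOn (cnt_injOn E s A)]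

lemma card_kept (E : Prio I S) (s : S) (A : Finset I) :
    (kept E s A).card = min (E.quota s) A.card := by
  have h1 : (kept E s A).image (cnt E s A) = (A.image (cnt E s A)).filter (· < E.quota s) := by
    ext n
    simp only [mem_image, mem_filter, kept]
    constructor
    · rintro ⟨i, hi, rfl⟩
      exact ⟨⟨i, hi.1, rfl⟩, hi.2⟩
    · rintro ⟨⟨i, hiA, rfl⟩, hic⟩
      exact ⟨i, ⟨hiA, hic⟩, rfl⟩
  have h2 : (kept E s A).card = ((kept E s A).image (cnt E s A)).card :=
    (card_image_of_injOn ((cnt_injOn E s A).mono (by exact_mod_cast kept_subset E s A))).symm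
  rw [h2, h1, image_cnt]
  have : (range A.card).filter (· < E.quota s) = range (min A.card (E.quota s)) := by
    ext n; simp [mem_range, mem_filter, Nat.lt_min, and_comm]
  rw [this, card_range, Nat.min_comm]

lemma card_kept_le (E : Prio I S) (s : S) (A : Finset I) :
    (kept E s A).card ≤ E.quota s := by
  rw [card_kept]; exact Nat.min_le_left _ _

/- ====== general deferred acceptance: existence of SOSM ====== -/

/-- the best alternative of `p` outside the rejection set `D`. -/
noncomputable def bestOf (p : Pref S) (D : Finset S) : Option S :=
  (Finset.exists_min_image (insert none ((Finset.univ \ D).image some)) p.rank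
    ⟨none, Finset.mem_insert_self _ _⟩).choose

lemma bestOf_spec (p : Pref S) (D : Finset S) :
    bestOf p D ∈ insert none ((Finset.univ \ D).image some) ∧
      ∀ x ∈ insert none ((Finset.univ \ D).image some), p.rank (bestOf p D) ≤ p.rank x := by
  have h := (Finset.exists_min_image (insert none ((Finset.univ \ D).image some)) p.rank
    ⟨none, Finset.mem_insert_self _ _⟩).choose_spec
  exact ⟨h.1, h.2⟩

lemma bestOf_le_none (p : Pref S) (D : Finset S) :
    p.rank (bestOf p D) ≤ p.rank none :=
  (bestOf_spec p D).2 none (mem_insert_self _ _)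

lemma bestOf_le (p : Pref S) {D : Finset S} {s : S} (h : s ∉ D) :
    p.rank (bestOf p D) ≤ p.rank (some s) :=
  (bestOf_spec p D).2 (some s) (mem_insert_of_mem (mem_image_of_mem some (by simp [h])))

lemma bestOf_not_mem {p : Pref S} {D : Finset S} {s : S} (h : bestOf p D = some s) :
    s ∉ D := by
  have := (bestOf_spec p D).1
  rw [h] at this
  rcases mem_insert.mp this with h' | h'
  · exact absurd h' (by simp)
  · rcases mem_image.mp h' with ⟨s', hs', he⟩
    obtain rfl : s' = s := Option.some_injective _ he
    exact (mem_sdiff.mp hs').2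

/-- applicants to `s` given rejection sets `D`. -/
noncomputable def App (E : Prio I S) (R : I → Pref S) (D : I → Finset S) (s : S) : Finset I :=
  univ.filter (fun i => bestOf (R i) (D i) = some s)

noncomputable def step (E : Prio I S) (R : I → Pref S) (D : I → Finset S) : I → Finset S :=
  fun i => D i ∪ univ.filter (fun s => bestOf (R i) (D i) = some s ∧ i ∉ kept E s (App E R D s))

lemma mem_step {E : Prio I S} {R : I → Pref S} {D : I → Finset S} {i : I} {s : S} :
    s ∈ step E R D i ↔ s ∈ D i ∨
      (bestOf (R i) (D i) = some s ∧ i ∉ kept E s (App E R D s)) := by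
  simp [step]

lemma subset_step (E : Prio I S) (R : I → Pref S) (D : I → Finset S) (i : I) :
    D i ⊆ step E R D i := subset_union_left

lemma step_eq_of_kept {E : Prio I S} {R : I → Pref S} {D : I → Finset S} {j : I} {s : S}
    (hj : bestOf (R j) (D j) = some s) (hk : j ∈ kept E s (App E R D s)) :
    step E R D j = D j := by
  apply Finset.Subset.antisymm _ (subset_step E R D j)
  intro s' hs'
  rcases mem_step.mp hs' with h | ⟨hb, hnk⟩
  · exact h
  · obtain rfl : s = s' := Option.some_injective _ (hj.symm.trans hb)
    exact absurd hk hnk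

lemma kept_subset_App_step {E : Prio I S} {R : I → Pref S} {D : I → Finset S} {s : S} :
    kept E s (App E R D s) ⊆ App E R (step E R D) s := by
  intro j hj
  have hjA : j ∈ App E R D s := kept_subset _ _ _ hj
  have hb : bestOf (R j) (D j) = some s := (mem_filter.mp hjA).2
  have : step E R D j = D j := step_eq_of_kept hb hj
  exact mem_filter.mpr ⟨mem_univ _, by rw [this]; exact hb⟩

def Phi (E : Prio I S) (R : I → Pref S) (D : I → Finset S) : Prop :=
  ∀ i s, s ∈ D i → E.quota s ≤ cnt E s (App E R D s) i

def Psi (E : Prio I S) (R : I → Pref S) (D : I → Finset S) : Prop :=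
  ∀ ν, Stable E R ν → ∀ i s, s ∈ D i → ν i ≠ some s

lemma Phi_step {E : Prio I S} {R : I → Pref S} {D : I → Finset S} (hΦ : Phi E R D) :
    Phi E R (step E R D) := by
  intro i s hs
  -- in both cases, `q ≤ cnt (App D s) i`
  have hq : E.quota s ≤ cnt E s (App E R D s) i := by
    rcases mem_step.mp hs with h | ⟨hb, hnk⟩
    · exact hΦ i s h
    · have hiA : i ∈ App E R D s := mem_filter.mpr ⟨mem_univ _, hb⟩
      by_contra hlt
      exact hnk (mem_kept.mpr ⟨hiA, by omega⟩)
  -- kept students are still applicants, all beating i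
  have hcardA : E.quota s ≤ (App E R D s).card :=
    le_trans hq (card_le_card (filter_subset _ _))
  have hkc : (kept E s (App E R D s)).card = E.quota s := by
    rw [card_kept]; omega
  have hsub : kept E s (App E R D s) ⊆
      (App E R (step E R D) s).filter (fun j => E.higher s j i) := by
    intro j hj
    exact mem_filter.mpr ⟨kept_subset_App_step hj, kept_beats hj hq⟩
  calc E.quota s = (kept E s (App E R D s)).card := hkc.symm
    _ ≤ _ := card_le_card hsub

lemma best_lt_stable {E : Prio I S} {R : I → Pref S} {D : I → Finset S}
    (hΨ : Psi E R D) {ν : Matching I S} (hν : Stable E R ν) {j : I} {s : S}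
    (hb : bestOf (R j) (D j) = some s) (hne : ν j ≠ some s) :
    (R j).rank (some s) < (R j).rank (ν j) := by
  have hneq : (R j).rank (some s) ≠ (R j).rank (ν j) := fun h => hne ((R j).inj h).symm
  rcases hv : ν j with _ | s''
  · have := bestOf_le_none (R j) (D j)
    rw [hb] at this
    rw [hv] at hneq
    omega
  · have hns : s'' ∉ D j := fun hmem => hΨ ν hν j s'' hmem hv
    have := bestOf_le (R j) hns
    rw [hb] at this
    rw [hv] at hneq
    omega

lemma Psi_step {E : Prio I S} {R : I → Pref S} {D : I → Finset S} (hΨ : Psi E R D) :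
    Psi E R (step E R D) := by
  intro ν hν i s hs hvi
  rcases mem_step.mp hs with h | ⟨hb, hnk⟩
  · exact hΨ ν hν i s h hvi
  · have hiA : i ∈ App E R D s := mem_filter.mpr ⟨mem_univ _, hb⟩
    have hq : E.quota s ≤ cnt E s (App E R D s) i := by
      by_contra hlt
      exact hnk (mem_kept.mpr ⟨hiA, by omega⟩)
    have hcardA : E.quota s ≤ (App E R D s).card :=
      le_trans hq (card_le_card (filter_subset _ _))
    have hkc : (kept E s (App E R D s)).card = E.quota s := by
      rw [card_kept]; omega
    -- find a kept student not assigned to s under ν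
    have hνcard : (assigned ν s).card ≤ E.quota s := hν.1 s
    have hex : ∃ j ∈ kept E s (App E R D s), j ∉ assigned ν s := by
      by_contra hall
      push_neg at hall
      have hsub : kept E s (App E R D s) ⊆ (assigned ν s).erase i := by
        intro j hj
        exact mem_erase.mpr ⟨fun he => hnk (he ▸ hj), hall j hj⟩
      have h1 : (assigned ν s).erase i ⊂ assigned ν s :=
        erase_ssubset (mem_filter.mpr ⟨mem_univ _, hvi⟩)
      have := card_le_card hsub
      have := card_lt_card h1
      omega
    rcases hex with ⟨j, hjk, hjs⟩
    have hbj : bestOf (R j) (D j) = some s := (mem_filter.mp (kept_subset _ _ _ hjk)).2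
    have hjne : ν j ≠ some s := fun h => hjs (mem_filter.mpr ⟨mem_univ _, h⟩)
    have hlt := best_lt_stable hΨ hν hbj hjne
    exact hν.2.2 j s ⟨hlt, Or.inr ⟨i, hvi, kept_beats hjk hq⟩⟩

noncomputable def iter (E : Prio I S) (R : I → Pref S) : ℕ → I → Finset S
  | 0 => fun _ => ∅
  | n + 1 => step E R (iter E R n)

lemma Phi_iter (E : Prio I S) (R : I → Pref S) (n : ℕ) : Phi E R (iter E R n) := by
  induction n with
  | zero => intro i s hs; simp [iter] at hs
  | succ n ih => exact Phi_step ih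

lemma Psi_iter (E : Prio I S) (R : I → Pref S) (n : ℕ) : Psi E R (iter E R n) := by
  induction n with
  | zero => intro ν hν i s hs; simp [iter] at hs
  | succ n ih => exact Psi_step ih

lemma exists_fix (E : Prio I S) (R : I → Pref S) :
    ∃ n, step E R (iter E R n) = iter E R n := by
  by_contra hno
  push_neg at hno
  set m : ℕ → ℕ := fun n => ∑ i : I, (iter E R n i).card with hm
  have hlt : ∀ n, m n < m (n + 1) := by
    intro n
    have hne := hno n
    have hx : ∃ i, iter E R n i ≠ step E R (iter E R n) i := by
      by_contra hc
      push_neg at hc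
      exact hne (funext fun i => (hc i).symm)
    rcases hx with ⟨i, hi⟩
    apply Finset.sum_lt_sum (fun j _ => card_le_card (subset_step E R _ j))
    exact ⟨i, mem_univ i, card_lt_card (Finset.ssubset_iff_subset_ne.mpr ⟨subset_step E R _ i,
      fun h => hi h⟩)⟩
  have hub : ∀ n, m n ≤ Fintype.card I * Fintype.card S := by
    intro n
    calc m n ≤ ∑ _i : I, Fintype.card S :=
          Finset.sum_le_sum (fun i _ => by
            simpa using card_le_card (subset_univ (iter E R n i)))
      _ = Fintype.card I * Fintype.card S := by simp [mul_comm]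
  have hge : ∀ n, n ≤ m n := by
    intro n
    induction n with
    | zero => omega
    | succ n ih => have := hlt n; omega
  have := hge (Fintype.card I * Fintype.card S + 1)
  have := hub (Fintype.card I * Fintype.card S + 1)
  omega

lemma exists_studentOptimal (E : Prio I S) (R : I → Pref S) :
    ∃ μ, StudentOptimal E R μ := by
  rcases exists_fix E R with ⟨N, hfix⟩
  set D := iter E R N with hD
  have hΦ : Phi E R D := Phi_iter E R N
  have hΨ : Psi E R D := Psi_iter E R N
  set μ : Matching I S := fun i => bestOf (R i) (D i) with hμ
  have hassign : ∀ s, assigned μ s = App E R D s := by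
    intro s; rfl
  -- at the fixpoint every applicant is kept
  have hAk : ∀ s, App E R D s = kept E s (App E R D s) := by
    intro s
    apply Finset.Subset.antisymm _ (kept_subset _ _ _)
    intro i hi
    have hb : bestOf (R i) (D i) = some s := (mem_filter.mp hi).2
    by_contra hnk
    have : s ∈ step E R D i := mem_step.mpr (Or.inr ⟨hb, hnk⟩)
    rw [hfix] at this
    exact bestOf_not_mem hb this
  have hcardle : ∀ s, (App E R D s).card ≤ E.quota s := by
    intro s
    have h1 := card_kept E s (App E R D s)
    rw [← hAk s] at h1
    omega
  have hstab : Stable E R μ := by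
    refine ⟨?_, ?_, ?_⟩
    · intro s; rw [hassign]; exact hcardle s
    · intro i; exact bestOf_le_none (R i) (D i)
    · rintro i s ⟨h1, h2⟩
      have hsD : s ∈ D i := by
        by_contra hns
        have := bestOf_le (R i) hns
        simp only [hμ] at h1
        omega
      have hq := hΦ i s hsD
      have hc2 : cnt E s (App E R D s) i ≤ (App E R D s).card :=
        card_le_card (filter_subset _ _)
      have hcard : (App E R D s).card = E.quota s := by
        have := hcardle s; omega
      rcases h2 with h2 | ⟨j, hj, hij⟩
      · rw [hassign] at h2; omega
      · have hjA : j ∈ App E R D s := by rw [← hassign]; exact mem_filter.mpr ⟨mem_univ _, hj⟩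
        have hjk : j ∈ kept E s (App E R D s) := (hAk s) ▸ hjA
        exact higher_asymm (kept_beats hjk hq) hij
  refine ⟨μ, hstab, ?_⟩
  intro ν hν i
  rcases hv : ν i with _ | s''
  · exact bestOf_le_none (R i) (D i)
  · have hns : s'' ∉ D i := fun hmem => hΨ ν hν i s'' hmem hv
    exact bestOf_le (R i) hns

lemma studentOptimal_unique {E : Prio I S} {R : I → Pref S} {μ₁ μ₂ : Matching I S}
    (h1 : StudentOptimal E R μ₁) (h2 : StudentOptimal E R μ₂) : μ₁ = μ₂ := by
  funext i
  have ha := h1.2 μ₂ h2.1 i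
  have hb := h2.2 μ₁ h1.1 i
  exact (R i).inj (le_antisymm ha hb)

lemma DA_studentOptimal (E : Prio I S) (R : I → Pref S) :
    StudentOptimal E R (DA E R) := by
  rw [DA, dif_pos (exists_studentOptimal E R)]
  exact (exists_studentOptimal E R).choose_spec

lemma DA_eq_of_studentOptimal {E : Prio I S} {R : I → Pref S} {m : Matching I S}
    (h : StudentOptimal E R m) : DA E R = m :=
  studentOptimal_unique (DA_studentOptimal E R) h

/- ====== single-school markets ====== -/

/-- students who find `σ` acceptable under profile `P`. -/
def Acc1 (P : I → Pref S) (σ : S) : Finset I :=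
  univ.filter (fun j => (P j).rank (some σ) < (P j).rank none)

/-- the outcome of DA in a market where only `σ` may be acceptable. -/
noncomputable def mOne (E : Prio I S) (P : I → Pref S) (σ : S) : Matching I S :=
  fun i => if i ∈ kept E σ (Acc1 P σ) then some σ else none

lemma mOne_eq_some {E : Prio I S} {P : I → Pref S} {σ : S} {i : I} {s : S} :
    mOne E P σ i = some s ↔ s = σ ∧ i ∈ kept E σ (Acc1 P σ) := by
  unfold mOne
  split
  · rename_i h
    constructor
    · intro he
      exact ⟨(Option.some_injective _ he).symm, h⟩
    · rintro ⟨rfl, _⟩; rfl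
  · rename_i h
    constructor
    · intro he; exact absurd he (by simp)
    · rintro ⟨rfl, hk⟩; exact absurd hk h

lemma mOne_studentOptimal {E : Prio I S} {P : I → Pref S} {σ : S}
    (hacc : ∀ j s', (P j).rank (some s') < (P j).rank none → s' = σ) :
    StudentOptimal E P (mOne E P σ) := by
  have hassign : assigned (mOne E P σ) σ = kept E σ (Acc1 P σ) := by
    ext i
    simp only [assigned, mem_filter, mem_univ, true_and]
    rw [mOne_eq_some]
    tauto
  have hassign' : ∀ s', s' ≠ σ → assigned (mOne E P σ) s' = ∅ := by
    intro s' hs'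
    ext i
    simp only [assigned, mem_filter, mem_univ, true_and, notMem_empty, iff_false]
    rw [mOne_eq_some]
    tauto
  have hIR : IndivRat P (mOne E P σ) := by
    intro i
    unfold mOne
    split
    · rename_i h
      exact le_of_lt (mem_filter.mp (kept_subset _ _ _ h)).2
    · exact le_refl _
  have hstab : Stable E P (mOne E P σ) := by
    refine ⟨?_, hIR, ?_⟩
    · intro s'
      by_cases hs' : s' = σ
      · subst hs'; rw [hassign]; exact card_kept_le _ _ _
      · rw [hassign' s' hs']; simp
    · rintro i s' ⟨h1, h2⟩
      have hs' : s' = σ := hacc i s' (lt_of_lt_of_le h1 (hIR i))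
      rw [hs'] at h1 h2
      have hmi : mOne E P σ i = none := by
        unfold mOne at h1 ⊢
        split at h1
        · omega
        · rename_i h
          rw [if_neg h]
      rw [hmi] at h1
      have hiA : i ∈ Acc1 P σ := mem_filter.mpr ⟨mem_univ _, h1⟩
      have hnk : i ∉ kept E σ (Acc1 P σ) := by
        intro hk
        rw [(mOne_eq_some (i := i) (s := σ)).mpr ⟨rfl, hk⟩] at hmi
        exact nomatch hmi
      have hq : E.quota σ ≤ cnt E σ (Acc1 P σ) i := by
        by_contra hlt
        exact hnk (mem_kept.mpr ⟨hiA, by omega⟩)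
      have hcA : E.quota σ ≤ (Acc1 P σ).card :=
        le_trans hq (card_le_card (filter_subset _ _))
      rcases h2 with h2 | ⟨j, hj, hij⟩
      · rw [hassign, card_kept] at h2; omega
      · have hjk : j ∈ kept E σ (Acc1 P σ) := ((mOne_eq_some).mp hj).2
        exact higher_asymm (kept_beats hjk hq) hij
  refine ⟨hstab, ?_⟩
  intro ν hν i
  have hνσ : ∀ j s'', ν j = some s'' → s'' = σ := by
    intro j s'' hj
    apply hacc j s''
    have h1 : (P j).rank (ν j) ≤ (P j).rank none := hν.2.1 j
    rw [hj] at h1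
    rcases lt_or_eq_of_le h1 with h | h
    · exact h
    · exact absurd ((P j).inj h) (by simp)
  by_cases hk : i ∈ kept E σ (Acc1 P σ)
  · have hmi : mOne E P σ i = some σ := (mOne_eq_some).mpr ⟨rfl, hk⟩
    rw [hmi]
    rcases hv : ν i with _ | s''
    · exact le_of_lt (mem_filter.mp (kept_subset _ _ _ hk)).2
    · rw [hνσ i s'' hv]
  · have hmi : mOne E P σ i = none := by
      unfold mOne; rw [if_neg hk]
    rw [hmi]
    rcases hv : ν i with _ | s''
    · exact le_refl _
    · obtain rfl : σ = s'' := (hνσ i s'' hv).symm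
      by_cases hiA : i ∈ Acc1 P σ
      · -- contradiction: ν is blocked
        exfalso
        have hq : E.quota σ ≤ cnt E σ (Acc1 P σ) i := by
          by_contra hlt
          exact hk (mem_kept.mpr ⟨hiA, by omega⟩)
        have hνcard : (assigned ν σ).card ≤ E.quota σ := hν.1 σ
        have hex : ∃ l ∈ (Acc1 P σ).filter (fun j => E.higher σ j i), l ∉ assigned ν σ := by
          by_contra hall
          push_neg at hall
          have hsub : (Acc1 P σ).filter (fun j => E.higher σ j i) ⊆ (assigned ν σ).erase i := by
            intro l hl
            refine mem_erase.mpr ⟨?_, hall l hl⟩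
            intro he
            exact higher_irrefl (he ▸ (mem_filter.mp hl).2)
          have h1 : (assigned ν σ).erase i ⊂ assigned ν σ :=
            erase_ssubset (mem_filter.mpr ⟨mem_univ _, hv⟩)
          have := card_le_card hsub
          have := card_lt_card h1
          unfold cnt at hq
          omega
        rcases hex with ⟨l, hl, hls⟩
        rcases mem_filter.mp hl with ⟨hlA, hli⟩
        have hlν : ν l = none := by
          rcases hv' : ν l with _ | s₃
          · rfl
          · obtain rfl : σ = s₃ := (hνσ l s₃ hv').symm
            exact absurd (mem_assigned.mpr hv') hls
        apply hν.2.2 l σ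
        refine ⟨?_, Or.inr ⟨i, hv, hli⟩⟩
        rw [hlν]
        exact (mem_filter.mp hlA).2
      · -- ν assigns i an unacceptable school: contradicts IR? no, gives inequality
        have h1 : ¬ (P i).rank (some σ) < (P i).rank none := fun h =>
          hiA (mem_filter.mpr ⟨mem_univ _, h⟩)
        omega

lemma DA_one {E : Prio I S} {P : I → Pref S} {σ : S}
    (hacc : ∀ j s', (P j).rank (some s') < (P j).rank none → s' = σ) :
    DA E P = mOne E P σ :=
  DA_eq_of_studentOptimal (mOne_studentOptimal hacc)

/- ====== analysis of TDA ====== -/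

lemma trunc_acc (A : S → Prop) [DecidablePred A] (p : Pref S) (s' : S) :
    ((trunc A p).rank (some s') < (trunc A p).rank none) ↔
      (A s' ∧ p.rank (some s') < p.rank none) := by
  have h0 : (trunc A p).rank none = p.rank none := by simp [trunc, goodB]
  by_cases h : A s'
  · have h1 : (trunc A p).rank (some s') = p.rank (some s') := by simp [trunc, goodB, h]
    rw [h0, h1]
    tauto
  · have h1 : (trunc A p).rank (some s') = bnd p + p.rank (some s') := by
      simp [trunc, goodB, h]
    rw [h0, h1]
    have := rank_lt_bnd p none
    constructor
    · intro hlt; omega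
    · rintro ⟨hA, _⟩; exact absurd hA h

/-- the round-`k+1` reported profile of TDA. -/
noncomputable def RP (E : Prio I S) (t : S → ℕ) (Q : I → Pref S) (k : ℕ) : I → Pref S :=
  fun j =>
    if TDAaux E t Q k j = none then trunc (fun s => t s = k + 1) (Q j)
    else trunc (fun _ => False) (Q j)

lemma TDAaux_succ (E : Prio I S) (t : S → ℕ) (Q : I → Pref S) (k : ℕ) (i : I) :
    TDAaux E t Q (k + 1) i =
      match TDAaux E t Q k i with
      | some s => some s
      | none => DA E (RP E t Q k) i := rfl

lemma TDAaux_succ_of_some {E : Prio I S} {t : S → ℕ} {Q : I → Pref S} {k : ℕ} {i : I}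
    {s : S} (h : TDAaux E t Q k i = some s) : TDAaux E t Q (k + 1) i = some s := by
  rw [TDAaux_succ, h]

lemma TDAaux_succ_of_none {E : Prio I S} {t : S → ℕ} {Q : I → Pref S} {k : ℕ} {i : I}
    (h : TDAaux E t Q k i = none) : TDAaux E t Q (k + 1) i = DA E (RP E t Q k) i := by
  rw [TDAaux_succ, h]

lemma tda_mono {E : Prio I S} {t : S → ℕ} {Q : I → Pref S} {k n : ℕ} (h : k ≤ n)
    {i : I} {s : S} (hs : TDAaux E t Q k i = some s) : TDAaux E t Q n i = some s := by
  induction n with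
  | zero =>
    obtain rfl : k = 0 := Nat.le_zero.mp h
    exact hs
  | succ n ih =>
    rcases Nat.lt_or_ge k (n + 1) with h' | h'
    · exact TDAaux_succ_of_some (ih (by omega))
    · obtain rfl : k = n + 1 := by omega
      exact hs

lemma tda_none_anti {E : Prio I S} {t : S → ℕ} {Q : I → Pref S} {k n : ℕ} (h : k ≤ n)
    {i : I} (hs : TDAaux E t Q n i = none) : TDAaux E t Q k i = none := by
  cases h' : TDAaux E t Q k i with
  | none => rfl
  | some s => rw [tda_mono h h'] at hs; exact hs

lemma RP_acc (E : Prio I S) (t : S → ℕ) (Q : I → Pref S) (k : ℕ) (j : I) (s' : S) :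
    ((RP E t Q k j).rank (some s') < (RP E t Q k j).rank none) ↔
      (TDAaux E t Q k j = none ∧ t s' = k + 1 ∧ (Q j).rank (some s') < (Q j).rank none) := by
  unfold RP
  split
  · rename_i h
    rw [trunc_acc]
    tauto
  · rename_i h
    rw [trunc_acc]
    tauto

/-- students unmatched before round `k+1` finding `s` acceptable. -/
noncomputable def AccQ (E : Prio I S) (t : S → ℕ) (Q : I → Pref S) (s : S) (k : ℕ) : Finset I :=
  univ.filter (fun j => TDAaux E t Q k j = none ∧ (Q j).rank (some s) < (Q j).rank none)

lemma mem_AccQ {E : Prio I S} {t : S → ℕ} {Q : I → Pref S} {s : S} {k : ℕ} {j : I} :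
    j ∈ AccQ E t Q s k ↔
      TDAaux E t Q k j = none ∧ (Q j).rank (some s) < (Q j).rank none := by
  simp [AccQ]

lemma tda_round {E : Prio I S} {t : S → ℕ} {Q : I → Pref S}
    (hone : Function.Injective t) (k : ℕ) (i : I) (s : S)
    (hnone : TDAaux E t Q k i = none) :
    TDAaux E t Q (k + 1) i = some s ↔
      t s = k + 1 ∧ i ∈ kept E s (AccQ E t Q s k) := by
  by_cases hex : ∃ s0, t s0 = k + 1
  · obtain ⟨σ, hσ⟩ := hex
    have hacc : ∀ j s', (RP E t Q k j).rank (some s') < (RP E t Q k j).rank none → s' = σ := by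
      intro j s' hlt
      obtain ⟨_, hts', _⟩ := (RP_acc E t Q k j s').mp hlt
      exact hone (hts'.trans hσ.symm)
    have hDA : TDAaux E t Q (k + 1) i = mOne E (RP E t Q k) σ i := by
      rw [TDAaux_succ_of_none hnone, DA_one hacc]
    have hAcc : Acc1 (RP E t Q k) σ = AccQ E t Q σ k := by
      ext j
      rw [mem_AccQ]
      simp only [Acc1, mem_filter, mem_univ, true_and]
      rw [RP_acc]
      tauto
    rw [hDA, mOne_eq_some, hAcc]
    constructor
    · rintro ⟨rfl, hk⟩
      exact ⟨hσ, hk⟩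
    · rintro ⟨hts, hk⟩
      have hss : s = σ := hone (hts.trans hσ.symm)
      exact ⟨hss, hss ▸ hk⟩
  · have hts : t s ≠ k + 1 := fun h => hex ⟨s, h⟩
    have hacc : ∀ j s', (RP E t Q k j).rank (some s') < (RP E t Q k j).rank none → s' = s := by
      intro j s' hlt
      exact absurd ⟨s', ((RP_acc E t Q k j s').mp hlt).2.1⟩ hex
    have hDA : TDAaux E t Q (k + 1) i = mOne E (RP E t Q k) s i := by
      rw [TDAaux_succ_of_none hnone, DA_one hacc]
    constructor
    · intro h
      rw [hDA, mOne_eq_some] at h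
      have hiA : i ∈ Acc1 (RP E t Q k) s := kept_subset _ _ _ h.2
      have := (mem_filter.mp hiA).2
      exact absurd ((RP_acc E t Q k i s).mp this).2.1 hts
    · rintro ⟨h, _⟩
      exact absurd h hts

lemma tda_char {E : Prio I S} {t : S → ℕ} {Q : I → Pref S}
    (ht1 : ∀ s', 1 ≤ t s') (hone : Function.Injective t) (k : ℕ) (i : I) (s : S) :
    TDAaux E t Q k i = some s ↔
      t s ≤ k ∧ i ∈ kept E s (AccQ E t Q s (t s - 1)) := by
  induction k with
  | zero =>
    have h0 : TDAaux E t Q 0 i = none := rfl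
    rw [h0]
    have := ht1 s
    constructor
    · intro h; exact absurd h (by simp)
    · rintro ⟨h, _⟩; omega
  | succ k ih =>
    cases h : TDAaux E t Q k i with
    | some s' =>
      rw [TDAaux_succ_of_some h]
      constructor
      · intro he
        obtain rfl : s' = s := Option.some_injective _ he
        obtain ⟨h1, h2⟩ := ih.mp h
        exact ⟨by omega, h2⟩
      · rintro ⟨hts, hkept⟩
        have hiacc : TDAaux E t Q (t s - 1) i = none :=
          (mem_AccQ.mp (kept_subset _ _ _ hkept)).1
        have hlt : t s - 1 < k := by
          by_contra hge
          push_neg at hge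
          rw [tda_none_anti hge hiacc] at h
          exact nomatch h
        have hts' : t s ≤ k := by have := ht1 s; omega
        have := ih.mpr ⟨hts', hkept⟩
        rw [h] at this
        exact this
    | none =>
      rw [tda_round hone k i s h]
      constructor
      · rintro ⟨hts, hkept⟩
        have he : t s - 1 = k := by omega
        rw [he]
        exact ⟨by omega, hkept⟩
      · rintro ⟨hts, hkept⟩
        have hnle : ¬ t s ≤ k := by
          intro hle
          have := ih.mpr ⟨hle, hkept⟩
          rw [h] at this
          exact nomatch this
        have hts' : t s = k + 1 := by omega
        have he : t s - 1 = k := by omega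
        rw [he] at hkept
        exact ⟨hts', hkept⟩

lemma assigned_TDA {E : Prio I S} {t : S → ℕ} {Q : I → Pref S}
    (ht1 : ∀ s', 1 ≤ t s') (hone : Function.Injective t) (s : S) :
    assigned (TDA E t Q) s = kept E s (AccQ E t Q s (t s - 1)) := by
  ext i
  rw [mem_assigned, TDA, tda_char ht1 hone]
  have hle : t s ≤ Finset.univ.sup t := Finset.le_sup (mem_univ s)
  tauto

/- ====== deviation preferences ====== -/

/-- a preference finding nothing acceptable. -/
noncomputable def emptyPref (p : Pref S) : Pref S where
  rank x := Option.elim x 0 (fun s' => 1 + p.rank (some s'))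
  inj := by
    intro x y h
    cases x with
    | none =>
      cases y with
      | none => rfl
      | some b => simp only [Option.elim_none, Option.elim_some] at h; omega
    | some a =>
      cases y with
      | none => simp only [Option.elim_none, Option.elim_some] at h; omega
      | some b =>
        simp only [Option.elim_some] at h
        exact p.inj (by omega : p.rank (some a) = p.rank (some b))

lemma emptyPref_acc (p : Pref S) (s' : S) :
    ¬ ((emptyPref p).rank (some s') < (emptyPref p).rank none) := by
  simp [emptyPref]

/-- a preference finding exactly `s₀` acceptable. -/
noncomputable def onlyPref (p : Pref S) (s₀ : S) : Pref S where
  rank x := Option.elim x 1 (fun s' => if s' = s₀ then 0 else 2 + p.rank (some s'))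
  inj := by
    intro x y h
    cases x with
    | none =>
      cases y with
      | none => rfl
      | some b =>
        simp only [Option.elim_none, Option.elim_some] at h
        by_cases hb : b = s₀ <;> simp only [hb, if_true, if_false] at h <;> omega
    | some a =>
      cases y with
      | none =>
        simp only [Option.elim_none, Option.elim_some] at h
        by_cases ha : a = s₀ <;> simp only [ha, if_true, if_false] at h <;> omega
      | some b =>
        simp only [Option.elim_some] at h
        by_cases ha : a = s₀ <;> by_cases hb : b = s₀ <;> simp only [ha, hb, if_true, if_false] at h
        · rw [ha, hb]
        · omega
        · omega
        · exact p.inj (by omega : p.rank (some a) = p.rank (some b))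

lemma onlyPref_acc (p : Pref S) (s₀ : S) (s' : S) :
    ((onlyPref p s₀).rank (some s') < (onlyPref p s₀).rank none) ↔ s' = s₀ := by
  by_cases h : s' = s₀ <;> simp [onlyPref, h]

/- ====== Nash equilibrium outcomes of TDA are stable ====== -/

lemma tda_never {E : Prio I S} {t : S → ℕ} {Q' : I → Pref S}
    (hone : Function.Injective t) {i₀ : I}
    (hun : ∀ s', ¬ ((Q' i₀).rank (some s') < (Q' i₀).rank none)) :
    ∀ k, TDAaux E t Q' k i₀ = none := by
  intro k
  induction k with
  | zero => rfl
  | succ k ih =>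
    cases h : TDAaux E t Q' (k + 1) i₀ with
    | none => rfl
    | some s =>
      obtain ⟨_, hkept⟩ := (tda_round hone k i₀ s ih).mp h
      have := (mem_AccQ.mp (kept_subset _ _ _ hkept)).2
      exact absurd this (hun s)

lemma tda_only {E : Prio I S} {t : S → ℕ} {Q' : I → Pref S}
    (hone : Function.Injective t) {i₀ : I} {s₀ : S}
    (honly : ∀ s', ((Q' i₀).rank (some s') < (Q' i₀).rank none) ↔ s' = s₀) :
    ∀ k, k < t s₀ → TDAaux E t Q' k i₀ = none := by
  intro k
  induction k with
  | zero => intro _; rfl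
  | succ k ih =>
    intro hk
    cases h : TDAaux E t Q' (k + 1) i₀ with
    | none => rfl
    | some s =>
      obtain ⟨hts, hkept⟩ := (tda_round hone k i₀ s (ih (by omega))).mp h
      have hacc := (mem_AccQ.mp (kept_subset _ _ _ hkept)).2
      obtain rfl : s = s₀ := (honly s).mp hacc
      omega

lemma tda_sub {E : Prio I S} {t : S → ℕ} {Q : I → Pref S}
    (hone : Function.Injective t) {i₀ : I} {Qi' : Pref S} {s₀ : S}
    (honly : ∀ s', ((Qi').rank (some s') < (Qi').rank none) ↔ s' = s₀) :
    ∀ k, k < t s₀ → ∀ j, TDAaux E t (Function.update Q i₀ Qi') k j = none →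
      j = i₀ ∨ TDAaux E t Q k j = none := by
  set Q' := Function.update Q i₀ Qi' with hQ'
  have hQ'i₀ : Q' i₀ = Qi' := Function.update_self _ _ _
  intro k
  induction k with
  | zero => intro _ j _; right; rfl
  | succ k ih =>
    intro hk j hj
    by_cases hji : j = i₀
    · exact Or.inl hji
    right
    have hj' : TDAaux E t Q' k j = none := tda_none_anti (by omega) hj
    have hjQ : TDAaux E t Q k j = none := by
      rcases ih (by omega) j hj' with h | h
      · exact absurd h hji
      · exact h
    cases h : TDAaux E t Q (k + 1) j with
    | none => rfl
    | some s =>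
      exfalso
      obtain ⟨hts, hkept⟩ := (tda_round hone k j s hjQ).mp h
      -- j would also be matched under Q'
      have hsub : AccQ E t Q' s k ⊆ AccQ E t Q s k := by
        intro l hl
        obtain ⟨hl1, hl2⟩ := mem_AccQ.mp hl
        by_cases hli : l = i₀
        · subst hli
          rw [hQ'i₀] at hl2
          obtain rfl : s = s₀ := (honly s).mp hl2
          omega
        · rcases ih (by omega) l hl1 with h' | h'
          · exact absurd h' hli
          · rw [hQ', Function.update_of_ne hli] at hl2
            exact mem_AccQ.mpr ⟨h', hl2⟩
      have hjA' : j ∈ AccQ E t Q' s k := by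
        obtain ⟨_, hacc⟩ := mem_AccQ.mp (kept_subset _ _ _ hkept)
        refine mem_AccQ.mpr ⟨hj', ?_⟩
        show (Q' j).rank (some s) < (Q' j).rank none
        rw [hQ', Function.update_of_ne hji]
        exact hacc
      have hkept' : j ∈ kept E s (AccQ E t Q' s k) := by
        refine mem_kept.mpr ⟨hjA', ?_⟩
        calc cnt E s (AccQ E t Q' s k) j ≤ cnt E s (AccQ E t Q s k) j :=
              cnt_le_of_subset E s hsub j
          _ < E.quota s := (mem_kept.mp hkept).2
      have := (tda_round hone k j s hj').mpr ⟨hts, hkept'⟩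
      rw [this] at hj
      exact nomatch hj

lemma TDA_NE_stable {E : Prio I S} {t : S → ℕ}
    (ht1 : ∀ s', 1 ≤ t s') (hone : Function.Injective t)
    {R Q : I → Pref S} (hNE : NashEq R (TDA E t) Q) : Stable E R (TDA E t Q) := by
  refine ⟨?_, ?_, ?_⟩
  · intro s
    rw [assigned_TDA ht1 hone]
    exact card_kept_le _ _ _
  · intro i
    have h0 := hNE i (emptyPref (R i))
    have h1 : TDA E t (Function.update Q i (emptyPref (R i))) i = none := by
      apply tda_never hone _ _
      intro s'
      rw [Function.update_self]
      exact emptyPref_acc (R i) s'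
    rw [h1] at h0
    exact h0
  · rintro i s₀ ⟨h1, h2⟩
    set Qi' := onlyPref (R i) s₀ with hQi'
    set Q' := Function.update Q i Qi' with hQ'def
    have honly0 : ∀ s', (Qi'.rank (some s') < Qi'.rank none) ↔ s' = s₀ :=
      onlyPref_acc (R i) s₀
    have honly : ∀ s', ((Q' i).rank (some s') < (Q' i).rank none) ↔ s' = s₀ := by
      intro s'
      rw [hQ'def, Function.update_self]
      exact honly0 s'
    set k₀ := t s₀ - 1 with hk₀
    have hts : t s₀ = k₀ + 1 := by have := ht1 s₀; omega
    have hiun : TDAaux E t Q' k₀ i = none := tda_only hone honly k₀ (by omega)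
    have hiA : i ∈ AccQ E t Q' s₀ k₀ :=
      mem_AccQ.mpr ⟨hiun, (honly s₀).mpr rfl⟩
    -- bounding the number of higher-priority rivals of i in round t s₀ under Q'
    have hcnt : cnt E s₀ (AccQ E t Q' s₀ k₀) i < E.quota s₀ := by
      have hsub : ∀ l ∈ AccQ E t Q' s₀ k₀, l ≠ i → l ∈ AccQ E t Q s₀ k₀ := by
        intro l hl hli
        obtain ⟨hl1, hl2⟩ := mem_AccQ.mp hl
        rcases tda_sub hone (Q := Q) honly0 k₀ (by omega) l hl1 with h | h
        · exact absurd h hli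
        · rw [hQ'def, Function.update_of_ne hli] at hl2
          exact mem_AccQ.mpr ⟨h, hl2⟩
      have hassigned := assigned_TDA (E := E) (Q := Q) ht1 hone s₀
      rcases h2 with h2 | ⟨j, hj, hij⟩
      · -- empty seat
        rw [hassigned, card_kept] at h2
        have hAcard : (AccQ E t Q s₀ k₀).card < E.quota s₀ := by
          rcases Nat.le_total (E.quota s₀) ((AccQ E t Q s₀ k₀).card) with hle | hle
          · rw [Nat.min_eq_left hle] at h2; omega
          · rw [Nat.min_eq_right hle] at h2; exact h2
        have : (AccQ E t Q' s₀ k₀).filter (fun l => E.higher s₀ l i) ⊆ AccQ E t Q s₀ k₀ := by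
          intro l hl
          obtain ⟨hlA, hlh⟩ := mem_filter.mp hl
          exact hsub l hlA (fun he => higher_irrefl (he ▸ hlh))
        have := card_le_card this
        unfold cnt
        omega
      · -- justified envy over j
        have hjk : j ∈ kept E s₀ (AccQ E t Q s₀ k₀) := by
          rw [← hassigned]
          exact mem_assigned.mpr hj
        have hjc := (mem_kept.mp hjk).2
        have : (AccQ E t Q' s₀ k₀).filter (fun l => E.higher s₀ l i) ⊆
            (AccQ E t Q s₀ k₀).filter (fun l => E.higher s₀ l j) := by
          intro l hl
          obtain ⟨hlA, hlh⟩ := mem_filter.mp hl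
          refine mem_filter.mpr ⟨hsub l hlA (fun he => higher_irrefl (he ▸ hlh)), higher_trans hlh hij⟩
        have := card_le_card this
        unfold cnt at hjc ⊢
        omega
    have hkept' : i ∈ kept E s₀ (AccQ E t Q' s₀ k₀) := mem_kept.mpr ⟨hiA, hcnt⟩
    have hstep : TDAaux E t Q' (k₀ + 1) i = some s₀ :=
      (tda_round hone k₀ i s₀ hiun).mpr ⟨hts.symm ▸ rfl, hkept'⟩
    have hfin : TDA E t Q' i = some s₀ := by
      rw [TDA]
      exact tda_mono (by rw [← hts]; exact Finset.le_sup (mem_univ s₀)) hstep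
    have := hNE i Qi'
    rw [← hQ'def, hfin] at this
    omega

/- ====== responsive comparison of assignments ====== -/

lemma resp_pr_aux {E : Prio I S} {s : S} {pr : Finset I → Finset I → Prop}
    (hpr : IsStrictTotalOrder (Finset I) pr) (hresp : Responsive E s pr) :
    ∀ n (A B : Finset I), (B \ A).card = n → A.card = B.card →
      (∀ j ∈ B, j ∉ A → ∀ i ∈ A, i ∉ B → E.higher s i j) → A ≠ B → pr A B := by
  intro n
  induction n with
  | zero =>
    intro A B hn hcard hdom hne
    have hsub : B ⊆ A := sdiff_eq_empty_iff_subset.mp (card_eq_zero.mp hn)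
    exact absurd (Finset.eq_of_subset_of_card_le hsub (le_of_eq hcard)).symm hne
  | succ n ih =>
    intro A B hn hcard hdom hne
    obtain ⟨j, hj⟩ : (B \ A).Nonempty := card_pos.mp (by omega)
    obtain ⟨hjB, hjA⟩ := mem_sdiff.mp hj
    obtain ⟨i, hi⟩ : (A \ B).Nonempty := by
      rw [← card_pos]
      have h1 := card_sdiff_add_card_inter A B
      have h2 := card_sdiff_add_card_inter B A
      rw [inter_comm B A] at h2
      omega
    obtain ⟨hiA, hiB⟩ := mem_sdiff.mp hi
    set J := B.erase j with hJ
    have hiJ : i ∉ J := fun h => hiB (mem_of_mem_erase h)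
    have hjJ : j ∉ J := notMem_erase _ _
    have hpr1 : pr (insert i J) (insert j J) :=
      hresp J i j hiJ hjJ (hdom j hjB hjA i hiA hiB)
    have hB : insert j J = B := insert_erase hjB
    set B' := insert i J with hB'
    have hcard' : A.card = B'.card := by
      rw [hB', card_insert_of_notMem hiJ, hJ, card_erase_of_mem hjB]
      have : 1 ≤ B.card := card_pos.mpr ⟨j, hjB⟩
      omega
    have hsd : B' \ A = (B \ A).erase j := by
      ext x
      simp only [hB', hJ, mem_sdiff, mem_erase, mem_insert]
      constructor
      · rintro ⟨rfl | ⟨hxj, hxB⟩, hxA⟩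
        · exact absurd hiA hxA
        · exact ⟨hxj, hxB, hxA⟩
      · rintro ⟨hxj, hxB, hxA⟩
        exact ⟨Or.inr ⟨hxj, hxB⟩, hxA⟩
    have hn' : (B' \ A).card = n := by
      rw [hsd, card_erase_of_mem hj]
      omega
    have hdom' : ∀ j' ∈ B', j' ∉ A → ∀ i' ∈ A, i' ∉ B' → E.higher s i' j' := by
      intro j' hj' hj'A i' hi'A hi'B'
      have hj'B : j' ∈ B := by
        rcases mem_insert.mp hj' with rfl | h
        · exact absurd hiA hj'A
        · exact mem_of_mem_erase h
      have hi'B : i' ∉ B := by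
        intro hi'B
        apply hi'B'
        apply mem_insert.mpr
        right
        refine mem_erase.mpr ⟨?_, hi'B⟩
        rintro rfl
        exact hjA hi'A
      exact hdom j' hj'B hj'A i' hi'A hi'B
    by_cases hAB' : A = B'
    · rw [hAB', ← hB]
      exact hpr1
    · exact hpr.trans A B' B (ih A B' hn' hcard' hdom' hAB') (hB ▸ hpr1)

lemma resp_not_pr {E : Prio I S} {s : S} {pr : Finset I → Finset I → Prop}
    (hpr : IsStrictTotalOrder (Finset I) pr) (hresp : Responsive E s pr)
    (A B : Finset I) (hcard : A.card = B.card)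
    (hdom : ∀ j ∈ B, j ∉ A → ∀ i ∈ A, i ∉ B → E.higher s i j) : ¬ pr B A := by
  intro hBA
  by_cases hne : A = B
  · rw [hne] at hBA
    exact hpr.irrefl B hBA
  · exact hpr.irrefl A (hpr.trans A B A (resp_pr_aux hpr hresp _ A B rfl hcard hdom hne) hBA)

lemma card_matched (μ : Matching I S) :
    ∑ s' : S, (assigned μ s').card = (univ.filter (fun i => μ i ≠ none)).card := by
  have heq : univ.filter (fun i => μ i ≠ none) = univ.biUnion (fun s' => assigned μ s') := by
    ext i
    simp [assigned, Option.ne_none_iff_exists']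
  rw [heq, card_biUnion]
  intro x _ y _ hxy
  show Disjoint (assigned μ x) (assigned μ y)
  rw [Finset.disjoint_left]
  intro a ha hb
  rw [mem_assigned] at ha hb
  rw [ha] at hb
  exact hxy (Option.some_injective _ hb)

/-- If the tier structure places exactly one school per tier, then every
school weakly prefers (under any responsive extension of its priorities) every Nash
equilibrium outcome of the TDA mechanism to the student-optimal stable matching `DA E R`. -/
theorem finest_TDA_schools_weakly_better
    (E : Prio I S) (t : S → ℕ) (T : ℕ) (ht : IsTierStructure t T)
    (hone : Function.Injective t)
    (R : I → Pref S) (μ : Matching I S) (hμ : NashOutcome R (TDA E t) μ)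
    (s : S) (pr : Finset I → Finset I → Prop)
    (hpr : IsStrictTotalOrder (Finset I) pr) (hresp : Responsive E s pr) :
    ¬ pr (assigned (DA E R) s) (assigned μ s) := by
  obtain ⟨Q, hNE, hQμ⟩ := hμ
  have ht1 : ∀ s', 1 ≤ t s' := fun s' => (ht.1 s').1
  have hstab : Stable E R μ := hQμ ▸ TDA_NE_stable ht1 hone hNE
  set ν := DA E R with hν
  have hSO : StudentOptimal E R ν := DA_studentOptimal E R
  -- students matched under μ are matched under ν
  have hmatch : ∀ i, μ i ≠ none → ν i ≠ none := by
    intro i hi hvi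
    have h1 := hSO.2 μ hstab i
    rw [hvi] at h1
    have h2 := hstab.2.1 i
    exact hi ((R i).inj (le_antisymm h2 h1))
  -- key fact about students in ν(s') \ μ(s')
  have hkey : ∀ s' j, ν j = some s' → μ j ≠ some s' →
      (R j).rank (some s') < (R j).rank (μ j) := by
    intro s' j hjν hjμ
    have h := hSO.2 μ hstab j
    rw [hjν] at h
    rcases lt_or_eq_of_le h with h' | h'
    · exact h'
    · exact absurd ((R j).inj h') (fun he => hjμ he.symm)
  -- pointwise: |ν(s')| ≤ |μ(s')|
  have hple : ∀ s', (assigned ν s').card ≤ (assigned μ s').card := by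
    intro s'
    by_cases hsub : assigned ν s' ⊆ assigned μ s'
    · exact card_le_card hsub
    · obtain ⟨j, hjν, hjμ⟩ := not_subset.mp hsub
      have hlt := hkey s' j (mem_assigned.mp hjν) (fun h => hjμ (mem_assigned.mpr h))
      have hnb := hstab.2.2 j s'
      rw [Blocks] at hnb
      push_neg at hnb
      have hq : E.quota s' ≤ (assigned μ s').card := (hnb hlt).1
      exact le_trans (hSO.1.1 s') hq
  -- sum comparison forces equality of cardinalities
  have hsum : ∑ s' : S, (assigned μ s').card ≤ ∑ s' : S, (assigned ν s').card := by
    rw [card_matched, card_matched]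
    apply card_le_card
    intro i hi
    rw [mem_filter] at hi ⊢
    exact ⟨hi.1, hmatch i hi.2⟩
  have hceq : (assigned ν s).card = (assigned μ s).card := by
    by_contra hc
    have hlt : (assigned ν s).card < (assigned μ s).card := lt_of_le_of_ne (hple s) hc
    have : ∑ s' : S, (assigned ν s').card < ∑ s' : S, (assigned μ s').card :=
      Finset.sum_lt_sum (fun x _ => hple x) ⟨s, mem_univ s, hlt⟩
    omega
  -- domination: every student of μ(s) beats every student of ν(s) \ μ(s)
  have hdom : ∀ j ∈ assigned ν s, j ∉ assigned μ s →
      ∀ i' ∈ assigned μ s, i' ∉ assigned ν s → E.higher s i' j := by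
    intro j hjB hjA i' hi'A _
    have hjν := mem_assigned.mp hjB
    have hjμ : μ j ≠ some s := fun h => hjA (mem_assigned.mpr h)
    have hlt := hkey s j hjν hjμ
    have hnb := hstab.2.2 j s
    rw [Blocks] at hnb
    push_neg at hnb
    have hne : ∀ i'', μ i'' = some s → ¬ E.higher s j i'' := (hnb hlt).2
    have hi'μ : μ i' = some s := mem_assigned.mp hi'A
    rcases higher_trichotomy E s i' j with rfl | h | h
    · exact absurd hi'μ hjμ
    · exact h
    · exact absurd h (hne i' hi'μ)
  exact resp_not_pr hpr hresp (assigned μ s) (assigned ν s) hceq.symm hdom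


end SchoolChoice
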